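/- Let F_z, F_q, F_p, F_b be subcomplexes of an ungraded chain complex (C,d) with F_z ⊆ F_q and F_p ⊆ F_b. The inclusion F_p ⊆ F_b induces a chain map of quotient complexes F_p/F_z → F_b/F_q (quotients taken with the convention X/Y := X/(X ∩ Y)) and hence a homomorphism H(F_p/F_z) → H(F_b/F_q) on homology, where H(F/F') := ker(d̄)/im(d̄) for the differential d̄ induced by d on the quotient complex. Then the S-term S^{pz}_{bq} is isomorphic to the image of this homomorphism H(F_p/F_z) → H(F_b/F_q). -/

import Mathlib

open Function

/-- The numerator subgroup `F_p ∩ d⁻¹(F_z)` of an S-term. -/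
abbrev Snum {C : Type*} [AddCommGroup C] (d : C →+ C) (Fp Fz : AddSubgroup C) :
    AddSubgroup C := Fp ⊓ Fz.comap d

/-- The denominator subgroup `d(F_b) + F_q` of an S-term. -/
abbrev Sden {C : Type*} [AddCommGroup C] (d : C →+ C) (Fb Fq : AddSubgroup C) :
    AddSubgroup C := Fb.map d ⊔ Fq

/-- The S-term `S^{pz}_{bq} = (F_p ∩ d⁻¹(F_z)) / ((F_p ∩ d⁻¹(F_z)) ∩ (d(F_b) + F_q))`. -/
abbrev Sterm {C : Type*} [AddCommGroup C] (d : C →+ C) (Fp Fz Fb Fq : AddSubgroup C) :=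
  ↥(Snum d Fp Fz) ⧸ (Sden d Fb Fq).addSubgroupOf (Snum d Fp Fz)

/-- The class of an element `x ∈ F_p ∩ d⁻¹(F_z)` in the S-term. -/
def Scls {C : Type*} [AddCommGroup C] (d : C →+ C) (Fp Fz Fb Fq : AddSubgroup C)
    {x : C} (hx : x ∈ Snum d Fp Fz) : Sterm d Fp Fz Fb Fq :=
  QuotientAddGroup.mk ⟨x, hx⟩

/-- The quotient complex `F/F' := F/(F ∩ F')` (as a group). -/
abbrev QC {C : Type*} [AddCommGroup C] (F F' : AddSubgroup C) :=
  ↥F ⧸ F'.addSubgroupOf F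

/-- The class of `x ∈ F` in the quotient complex `F/F'`. -/
def QCmk {C : Type*} [AddCommGroup C] (F F' : AddSubgroup C) {x : C} (hx : x ∈ F) :
    QC F F' := QuotientAddGroup.mk ⟨x, hx⟩

/-- The differential induced by `d` on the quotient complex `F/F'`. -/
def qdiff {C : Type*} [AddCommGroup C] (d : C →+ C) (F F' : AddSubgroup C)
    (hF : ∀ x ∈ F, d x ∈ F) (hF' : ∀ x ∈ F', d x ∈ F') : QC F F' →+ QC F F' :=
  QuotientAddGroup.lift _
    ((QuotientAddGroup.mk' _).comp
      (AddMonoidHom.codRestrict (d.comp (AddSubmonoidClass.subtype F)) F (fun x => hF x.1 x.2)))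
    (fun x hx =>
      (QuotientAddGroup.eq_zero_iff _).mpr
        (AddSubgroup.mem_addSubgroupOf.mpr
          (hF' x.1 (AddSubgroup.mem_addSubgroupOf.mp hx))))

/-- The homology `ker f / im f` of an (ungraded) differential `f`. -/
abbrev Hgy {A : Type*} [AddCommGroup A] (f : A →+ A) :=
  ↥f.ker ⧸ f.range.addSubgroupOf f.ker

section Aux

variable {C : Type*} [AddCommGroup C] (d : C →+ C)
variable (Fz Fq Fp Fb : AddSubgroup C)

/-- The chain map `F_p/F_z → F_b/F_q` induced by inclusion. -/
def qcmap (hzq : Fz ≤ Fq) (hpb : Fp ≤ Fb) : QC Fp Fz →+ QC Fb Fq :=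
  QuotientAddGroup.lift _
    ((QuotientAddGroup.mk' _).comp (AddSubgroup.inclusion hpb))
    (fun x hx =>
      (QuotientAddGroup.eq_zero_iff _).mpr
        (AddSubgroup.mem_addSubgroupOf.mpr (hzq (AddSubgroup.mem_addSubgroupOf.mp hx))))

theorem qcmap_mk (hzq : Fz ≤ Fq) (hpb : Fp ≤ Fb) {x : C} (hx : x ∈ Fp) (hx' : x ∈ Fb) :
    qcmap Fz Fq Fp Fb hzq hpb (QCmk Fp Fz hx) = QCmk Fb Fq hx' := rfl

theorem qdiff_mk (F F' : AddSubgroup C)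
    (hF : ∀ x ∈ F, d x ∈ F) (hF' : ∀ x ∈ F', d x ∈ F') {x : C} (hx : x ∈ F) :
    qdiff d F F' hF hF' (QCmk F F' hx) = QCmk F F' (hF x hx) := rfl

variable (hFz : ∀ x ∈ Fz, d x ∈ Fz) (hFq : ∀ x ∈ Fq, d x ∈ Fq)
variable (hFp : ∀ x ∈ Fp, d x ∈ Fp) (hFb : ∀ x ∈ Fb, d x ∈ Fb)
variable (hzq : Fz ≤ Fq) (hpb : Fp ≤ Fb)

theorem qcmap_comm (u : QC Fp Fz) :
    qcmap Fz Fq Fp Fb hzq hpb (qdiff d Fp Fz hFp hFz u)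
      = qdiff d Fb Fq hFb hFq (qcmap Fz Fq Fp Fb hzq hpb u) := by
  induction u using QuotientAddGroup.induction_on with
  | H x => rfl

theorem qcmap_ker (u : QC Fp Fz) (hu : u ∈ (qdiff d Fp Fz hFp hFz).ker) :
    qcmap Fz Fq Fp Fb hzq hpb u ∈ (qdiff d Fb Fq hFb hFq).ker := by
  rw [AddMonoidHom.mem_ker, ← qcmap_comm d Fz Fq Fp Fb hFz hFq hFp hFb hzq hpb,
    AddMonoidHom.mem_ker.mp hu, map_zero]

/-- The map on cycles induced by `qcmap`. -/
def qcmapKer : ↥(qdiff d Fp Fz hFp hFz).ker →+ ↥(qdiff d Fb Fq hFb hFq).ker :=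
  AddMonoidHom.codRestrict
    ((qcmap Fz Fq Fp Fb hzq hpb).comp (qdiff d Fp Fz hFp hFz).ker.subtype) _
    (fun u => qcmap_ker d Fz Fq Fp Fb hFz hFq hFp hFb hzq hpb u.1 u.2)

/-- The induced map on homology. -/
def hmap : Hgy (qdiff d Fp Fz hFp hFz) →+ Hgy (qdiff d Fb Fq hFb hFq) :=
  QuotientAddGroup.lift _
    ((QuotientAddGroup.mk' _).comp (qcmapKer d Fz Fq Fp Fb hFz hFq hFp hFb hzq hpb))
    (by
      rintro ⟨u, hu⟩ h
      obtain ⟨v, hv⟩ := AddSubgroup.mem_addSubgroupOf.mp h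
      apply (QuotientAddGroup.eq_zero_iff _).mpr
      apply AddSubgroup.mem_addSubgroupOf.mpr
      exact ⟨qcmap Fz Fq Fp Fb hzq hpb v, by
        show qdiff d Fb Fq hFb hFq _ = _
        rw [← qcmap_comm d Fz Fq Fp Fb hFz hFq hFp hFb hzq hpb, hv]; rfl⟩)

theorem hmap_mk (u : QC Fp Fz) (hu : u ∈ (qdiff d Fp Fz hFp hFz).ker)
    (hu' : qcmap Fz Fq Fp Fb hzq hpb u ∈ (qdiff d Fb Fq hFb hFq).ker) :
    hmap d Fz Fq Fp Fb hFz hFq hFp hFb hzq hpb (QuotientAddGroup.mk ⟨u, hu⟩)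
      = QuotientAddGroup.mk ⟨qcmap Fz Fq Fp Fb hzq hpb u, hu'⟩ := rfl

end Aux

theorem mem_range_iff_sden {C : Type*} [AddCommGroup C] (d : C →+ C)
    (Fq Fb : AddSubgroup C) (hFq : ∀ x ∈ Fq, d x ∈ Fq) (hFb : ∀ x ∈ Fb, d x ∈ Fb)
    {x : C} (hx : x ∈ Fb) :
    QCmk Fb Fq hx ∈ (qdiff d Fb Fq hFb hFq).range ↔ x ∈ Sden d Fb Fq := by
  constructor
  · rintro ⟨v, hv⟩
    induction v using QuotientAddGroup.induction_on with
    | H y =>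
      obtain ⟨y, hy⟩ := y
      rw [show qdiff d Fb Fq hFb hFq (QuotientAddGroup.mk ⟨y, hy⟩)
            = QCmk Fb Fq (hFb y hy) from rfl] at hv
      have h2 : -(d y) + x ∈ Fq := by
        have := (QuotientAddGroup.eq (s := Fq.addSubgroupOf Fb)
          (a := ⟨d y, hFb y hy⟩) (b := ⟨x, hx⟩)).mp hv
        exact AddSubgroup.mem_addSubgroupOf.mp this
      have hxeq : x = d y + (-(d y) + x) := by abel
      rw [hxeq]
      exact add_mem (AddSubgroup.mem_sup_left ⟨y, hy, rfl⟩)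
        (AddSubgroup.mem_sup_right h2)
  · intro hxs
    obtain ⟨a, ha, b, hb, hab⟩ := AddSubgroup.mem_sup.mp hxs
    obtain ⟨y, hy, rfl⟩ := ha
    refine ⟨QCmk Fb Fq hy, ?_⟩
    rw [show qdiff d Fb Fq hFb hFq (QCmk Fb Fq hy) = QCmk Fb Fq (hFb y hy) from rfl]
    apply (QuotientAddGroup.eq (s := Fq.addSubgroupOf Fb)
      (a := ⟨d y, hFb y hy⟩) (b := ⟨x, hx⟩)).mpr
    apply AddSubgroup.mem_addSubgroupOf.mpr
    show -(d y) + x ∈ Fq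
    have : -(d y) + x = b := by rw [← hab]; abel
    rw [this]; exact hb

/-- For subcomplexes `F_z ⊆ F_q`, `F_p ⊆ F_b` of an ungraded chain complex
`(C,d)`, the inclusion induces a chain map `F_p/F_z → F_b/F_q` and hence a homomorphism
`H(F_p/F_z) → H(F_b/F_q)`, and the S-term `S^{pz}_{bq}` is isomorphic to its image. -/
theorem statement0 {C : Type*} [AddCommGroup C] (d : C →+ C) (hd : ∀ x : C, d (d x) = 0)
    (Fz Fq Fp Fb : AddSubgroup C)
    (hFz : ∀ x ∈ Fz, d x ∈ Fz) (hFq : ∀ x ∈ Fq, d x ∈ Fq)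
    (hFp : ∀ x ∈ Fp, d x ∈ Fp) (hFb : ∀ x ∈ Fb, d x ∈ Fb)
    (hzq : Fz ≤ Fq) (hpb : Fp ≤ Fb) :
    ∃ φ : QC Fp Fz →+ QC Fb Fq,
      (∀ (x : C) (hx : x ∈ Fp) (hx' : x ∈ Fb),
        φ (QCmk Fp Fz hx) = QCmk Fb Fq hx') ∧
      (∀ u ∈ (qdiff d Fp Fz hFp hFz).ker, φ u ∈ (qdiff d Fb Fq hFb hFq).ker) ∧
      ∃ hφ : Hgy (qdiff d Fp Fz hFp hFz) →+ Hgy (qdiff d Fb Fq hFb hFq),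
        (∀ (u : QC Fp Fz) (hu : u ∈ (qdiff d Fp Fz hFp hFz).ker)
            (hu' : φ u ∈ (qdiff d Fb Fq hFb hFq).ker),
          hφ (QuotientAddGroup.mk ⟨u, hu⟩) = QuotientAddGroup.mk ⟨φ u, hu'⟩) ∧
        Nonempty (Sterm d Fp Fz Fb Fq ≃+ hφ.range) := by
  classical
  set φ := qcmap Fz Fq Fp Fb hzq hpb with hφdef
  have hker := qcmap_ker d Fz Fq Fp Fb hFz hFq hFp hFb hzq hpb
  refine ⟨φ, fun x hx hx' => rfl, fun u hu => hker u hu,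
    hmap d Fz Fq Fp Fb hFz hFq hFp hFb hzq hpb, fun u hu hu' => rfl, ?_⟩
  -- the map from Snum to homology of the target
  have snum_ker : ∀ x : ↥(Snum d Fp Fz),
      QCmk Fp Fz x.2.1 ∈ (qdiff d Fp Fz hFp hFz).ker := by
    intro x
    show qdiff d Fp Fz hFp hFz (QCmk Fp Fz x.2.1) = 0
    rw [show qdiff d Fp Fz hFp hFz (QCmk Fp Fz x.2.1)
          = QCmk Fp Fz (hFp x.1 x.2.1) from rfl]
    exact (QuotientAddGroup.eq_zero_iff _).mpr (AddSubgroup.mem_addSubgroupOf.mpr x.2.2)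
  let sj : ↥(Snum d Fp Fz) →+ ↥(qdiff d Fp Fz hFp hFz).ker :=
    { toFun := fun x => ⟨QCmk Fp Fz x.2.1, snum_ker x⟩
      map_zero' := rfl
      map_add' := fun x y => rfl }
  let hφ := hmap d Fz Fq Fp Fb hFz hFq hFp hFb hzq hpb
  let spsi : ↥(Snum d Fp Fz) →+ Hgy (qdiff d Fb Fq hFb hFq) :=
    hφ.comp ((QuotientAddGroup.mk' _).comp sj)
  let ψ : ↥(Snum d Fp Fz) →+ ↥hφ.range :=
    spsi.codRestrict _ (fun x => ⟨QuotientAddGroup.mk (sj x), rfl⟩)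
  have hsurj : Surjective ψ := by
    rintro ⟨y, h, rfl⟩
    induction h using QuotientAddGroup.induction_on with
    | H u =>
      obtain ⟨u, hu⟩ := u
      induction u using QuotientAddGroup.induction_on with
      | H x =>
        obtain ⟨x, hx⟩ := x
        have hdz : d x ∈ Fz := by
          have h0 : qdiff d Fp Fz hFp hFz (QuotientAddGroup.mk ⟨x, hx⟩) = 0 := hu
          rw [show qdiff d Fp Fz hFp hFz (QuotientAddGroup.mk ⟨x, hx⟩)
                = QCmk Fp Fz (hFp x hx) from rfl] at h0
          exact AddSubgroup.mem_addSubgroupOf.mp ((QuotientAddGroup.eq_zero_iff _).mp h0)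
        exact ⟨⟨x, hx, hdz⟩, rfl⟩
  have hkereq : ψ.ker = (Sden d Fb Fq).addSubgroupOf (Snum d Fp Fz) := by
    ext x
    have h1 : ψ x = 0 ↔ spsi x = 0 := Subtype.ext_iff
    have h2 : spsi x = 0 ↔
        qcmapKer d Fz Fq Fp Fb hFz hFq hFp hFb hzq hpb (sj x) ∈
          (qdiff d Fb Fq hFb hFq).range.addSubgroupOf (qdiff d Fb Fq hFb hFq).ker := by
      exact QuotientAddGroup.eq_zero_iff _
    have h3 : (qcmapKer d Fz Fq Fp Fb hFz hFq hFp hFb hzq hpb (sj x) : QC Fb Fq)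
        = QCmk Fb Fq (hpb x.2.1) := rfl
    rw [AddMonoidHom.mem_ker, h1, h2, AddSubgroup.mem_addSubgroupOf, h3,
      mem_range_iff_sden d Fq Fb hFq hFb (hpb x.2.1), AddSubgroup.mem_addSubgroupOf]
  exact ⟨((QuotientAddGroup.quotientAddEquivOfEq hkereq.symm).trans
    (QuotientAddGroup.quotientKerEquivOfSurjective ψ hsurj))⟩
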